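/- A finite-outcome POVM A = (a_x)_{x∈X} on a finite-dimensional Hilbert space is a PVM (each a_x is a projection) if and only if A is completely intersubjective, i.e., every coarse-graining of A is intersubjective. Here a coarse-graining of A along a map π: X → Y is the POVM B = (b_y)_{y∈Y} with b_y = ∑_{x∈π⁻¹(y)} a_x, and a POVM B is intersubjective if every POVM (c_{y,y'}) on Y×Y with both marginals equal to B satisfies ∑_y c_{y,y} = 1. -/

import Mathlib

open scoped ComplexOrder

open Finset

/-- A finite-outcome POVM: positive semidefinite operators summing to the identity. -/
def IsPOVM {X : Type*} [Fintype X] {n : ℕ} (A : X → Matrix (Fin n) (Fin n) ℂ) : Prop :=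
  (∀ x, (A x).PosSemidef) ∧ ∑ x, A x = 1

/-- A POVM `B` is intersubjective if every joint POVM of `B` with itself has diagonal
summing to the identity. -/
def POVMIntersubjective {Y : Type*} [Fintype Y] {n : ℕ}
    (B : Y → Matrix (Fin n) (Fin n) ℂ) : Prop :=
  ∀ C : Y × Y → Matrix (Fin n) (Fin n) ℂ, IsPOVM C →
    (∀ y, ∑ y', C (y, y') = B y) → (∀ y', ∑ y, C (y, y') = B y') →
    ∑ y, C (y, y) = 1

open Matrix

/-- A matrix that is both psd and has psd negation is zero. -/
lemma psd_neg_psd_eq_zero {n : ℕ} {M : Matrix (Fin n) (Fin n) ℂ}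
    (h1 : M.PosSemidef) (h2 : (-M).PosSemidef) : M = 0 := by
  have hv : ∀ v : Fin n → ℂ, M *ᵥ v = 0 := by
    intro v
    rw [← h1.dotProduct_mulVec_zero_iff]
    have a1 := h1.dotProduct_mulVec_nonneg v
    have a2 := h2.dotProduct_mulVec_nonneg v
    rw [Matrix.neg_mulVec, dotProduct_neg] at a2
    exact le_antisymm (neg_nonneg.mp a2) a1
  ext i j
  have := congrFun (hv (Pi.single j 1)) i
  simpa [Matrix.mulVec, dotProduct, Pi.single_apply] using this

open scoped MatrixOrder

/-- Absorption: if `c` is psd, `p` is a psd idempotent, and `p - c` is psd,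
then `p` absorbs `c` on both sides. -/
lemma absorb {n : ℕ} {p c : Matrix (Fin n) (Fin n) ℂ}
    (hp : p.PosSemidef) (hpp : p * p = p) (hc : c.PosSemidef)
    (hpc : (p - c).PosSemidef) : p * c = c ∧ c * p = c := by
  have hph : pᴴ = p := hp.isHermitian
  have hch : cᴴ = c := hc.isHermitian
  -- (1-p) * c * (1-p) = 0
  have hq : (1 - p)ᴴ = 1 - p := by
    rw [Matrix.conjTranspose_sub, Matrix.conjTranspose_one, hph]
  have key : (1 - p) * c * (1 - p) = 0 := by
    have h1 : ((1 - p) * (p - c) * (1 - p)ᴴ).PosSemidef :=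
      hpc.mul_mul_conjTranspose_same (1 - p)
    have hzero : (1 - p) * (p - c) * (1 - p)ᴴ = -((1 - p) * c * (1 - p)) := by
      rw [hq]
      have : (1 - p) * (p - c) = -((1 - p) * c) := by
        rw [mul_sub, sub_mul, one_mul, hpp, sub_self, zero_sub]
      rw [this, neg_mul]
    rw [hzero] at h1
    have h2 : ((1 - p) * c * (1 - p)).PosSemidef := by
      have := hc.mul_mul_conjTranspose_same (1 - p)
      rwa [hq] at this
    exact psd_neg_psd_eq_zero h2 h1
  -- from key: sqrt c * (1 - p) = 0
  set s := CFC.sqrt c with hs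
  have hss : s * s = c := CFC.sqrt_mul_sqrt_self c hc.nonneg
  have hsh : sᴴ = s := (CFC.sqrt_nonneg c).posSemidef.isHermitian
  have hkey2 : (s * (1 - p))ᴴ * (s * (1 - p)) = 0 := by
    rw [Matrix.conjTranspose_mul, hsh, hq]
    calc (1 - p) * s * (s * (1 - p)) = (1 - p) * (s * s) * (1 - p) := by
          rw [Matrix.mul_assoc, Matrix.mul_assoc, Matrix.mul_assoc]
      _ = 0 := by rw [hss]; exact key
  have hsp : s * (1 - p) = 0 := Matrix.conjTranspose_mul_self_eq_zero.mp hkey2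
  have hcp : c * p = c := by
    have h0 : c * (1 - p) = 0 := by
      calc c * (1 - p) = s * (s * (1 - p)) := by rw [← Matrix.mul_assoc, hss]
        _ = 0 := by rw [hsp, Matrix.mul_zero]
    rw [mul_sub, mul_one] at h0
    exact (sub_eq_zero.mp h0).symm
  exact ⟨by rw [← hch, ← hph, ← Matrix.conjTranspose_mul, hcp, hch], hcp⟩

/-- A finite sum of psd matrices is psd. -/
lemma psd_sum {ι : Type*} {n : ℕ} (s : Finset ι) (f : ι → Matrix (Fin n) (Fin n) ℂ)
    (h : ∀ i ∈ s, (f i).PosSemidef) : (∑ i ∈ s, f i).PosSemidef :=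
  Finset.sum_induction f _ (fun _ _ ha hb => ha.add hb) Matrix.PosSemidef.zero h

/-- a POVM is a PVM (every element a projection) iff it is completely
intersubjective, i.e. every coarse-graining of it is intersubjective. -/
theorem pvm_iff_completely_intersubjective {n : ℕ} {X : Type*} [Fintype X]
    (A : X → Matrix (Fin n) (Fin n) ℂ) (hA : IsPOVM A) :
    (∀ x, A x * A x = A x) ↔
      ∀ (Y : Type) [Fintype Y] [DecidableEq Y] (π : X → Y),
        POVMIntersubjective (fun y => ∑ x ∈ univ.filter (fun x => π x = y), A x) := by
  classical
  have hApsd := hA.1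
  constructor
  · -- PVM ⇒ completely intersubjective
    intro hproj Y _ _ π
    set B : Y → Matrix (Fin n) (Fin n) ℂ :=
      fun y => ∑ x ∈ univ.filter (fun x => π x = y), A x with hB
    -- mutual orthogonality of the effects
    have hsum_erase : ∀ x : X, ∑ x'' ∈ univ.erase x, A x'' = 1 - A x := by
      intro x
      rw [Finset.sum_erase_eq_sub (mem_univ x), hA.2]
    have horthA : ∀ x x' : X, x ≠ x' → A x * A x' = 0 := by
      intro x x' hne
      have hone : ((1 : Matrix (Fin n) (Fin n) ℂ) - A x).PosSemidef := by
        rw [← hsum_erase x]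
        exact psd_sum _ _ fun i _ => hApsd i
      have honep : ((1 : Matrix (Fin n) (Fin n) ℂ) - A x) * (1 - A x) = 1 - A x := by
        have := hproj x
        noncomm_ring [this]
      have hsub : (((1 : Matrix (Fin n) (Fin n) ℂ) - A x) - A x').PosSemidef := by
        have hx' : x' ∈ univ.erase x := Finset.mem_erase.mpr ⟨fun h => hne h.symm, mem_univ _⟩
        have : ∑ x'' ∈ (univ.erase x).erase x', A x'' = (1 - A x) - A x' := by
          rw [Finset.sum_erase_eq_sub hx', hsum_erase x]
        rw [← this]
        exact psd_sum _ _ fun i _ => hApsd i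
      have habs := (absorb hone honep (hApsd x') hsub).1
      rw [sub_mul, one_mul] at habs
      exact sub_eq_self.mp habs
    -- the coarse-grained POVM is a PVM
    have hBpsd : ∀ y, (B y).PosSemidef := fun y => psd_sum _ _ fun i _ => hApsd i
    have hBproj : ∀ y, B y * B y = B y := by
      intro y
      rw [hB]
      simp only
      rw [Finset.sum_mul_sum]
      refine Finset.sum_congr rfl fun x hx => ?_
      exact (Finset.sum_eq_single_of_mem x hx fun b _ hb =>
        horthA x b (Ne.symm hb)).trans (hproj x)
    have hBortho : ∀ y y', y ≠ y' → B y * B y' = 0 := by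
      intro y y' hne
      rw [hB]
      simp only
      rw [Finset.sum_mul_sum]
      refine Finset.sum_eq_zero fun x hx => Finset.sum_eq_zero fun x' hx' => ?_
      refine horthA x x' fun hxx => hne ?_
      rw [← (mem_filter.mp hx).2, hxx, (mem_filter.mp hx').2]
    -- intersubjectivity
    intro C hC hrow hcol
    have hCpsd := hC.1
    have habs : ∀ y y' : Y, y ≠ y' → C (y, y') = 0 := by
      intro y y' hne
      have h1 : (B y - C (y, y')).PosSemidef := by
        have : ∑ z ∈ univ.erase y', C (y, z) = B y - C (y, y') := by
          rw [Finset.sum_erase_eq_sub (mem_univ y'), hrow y]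
        rw [← this]
        exact psd_sum _ _ fun i _ => hCpsd _
      have e1 := absorb (hBpsd y) (hBproj y) (hCpsd _) h1
      have h2 : (B y' - C (y, y')).PosSemidef := by
        have : ∑ z ∈ univ.erase y, C (z, y') = B y' - C (y, y') := by
          rw [Finset.sum_erase_eq_sub (mem_univ y), hcol y']
        rw [← this]
        exact psd_sum _ _ fun i _ => hCpsd _
      have e2 := absorb (hBpsd y') (hBproj y') (hCpsd _) h2
      calc C (y, y') = B y' * C (y, y') := e2.1.symm
        _ = B y' * (B y * C (y, y')) := by rw [e1.1]
        _ = (B y' * B y) * C (y, y') := by rw [Matrix.mul_assoc]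
        _ = 0 := by rw [hBortho y' y (Ne.symm hne), Matrix.zero_mul]
    calc ∑ y, C (y, y) = ∑ y, ∑ y', C (y, y') := by
          refine Finset.sum_congr rfl fun y _ => ?_
          exact (Finset.sum_eq_single_of_mem y (mem_univ y)
            fun b _ hb => habs y b (Ne.symm hb)).symm
      _ = ∑ p : Y × Y, C p := (Fintype.sum_prod_type _).symm
      _ = 1 := hC.2
  · -- completely intersubjective ⇒ PVM
    intro h x
    set a := A x with ha_def
    have ha := hApsd x
    have hah : aᴴ = a := ha.isHermitian
    have h1a : ((1 : Matrix (Fin n) (Fin n) ℂ) - a).PosSemidef := by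
      have : ∑ x'' ∈ univ.erase x, A x'' = 1 - a := by
        rw [Finset.sum_erase_eq_sub (mem_univ x), hA.2]
      rw [← this]
      exact psd_sum _ _ fun i _ => hApsd i
    have h1ah : ((1 : Matrix (Fin n) (Fin n) ℂ) - a)ᴴ = 1 - a := h1a.isHermitian
    -- square root commutation
    set s := CFC.sqrt a with hs_def
    have hss : s * s = a := CFC.sqrt_mul_sqrt_self a ha.nonneg
    have hsh : sᴴ = s := (CFC.sqrt_nonneg a).posSemidef.isHermitian
    have hsa : s * a = a * s := by rw [← hss, Matrix.mul_assoc]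
    have hcomm : a * (1 - a) = (1 - a) * a := by noncomm_ring
    have hs1a : (1 - a) * s = s * (1 - a) := by
      rw [sub_mul, mul_sub, one_mul, mul_one, hsa]
    -- the four products are psd
    have hpsd_aa : (a * a).PosSemidef := by
      nth_rw 1 [← hah]
      exact Matrix.posSemidef_conjTranspose_mul_self a
    have hpsd_bb : ((1 - a) * (1 - a)).PosSemidef := by
      nth_rw 1 [← h1ah]
      exact Matrix.posSemidef_conjTranspose_mul_self (1 - a)
    have hpsd_ab : (a * (1 - a)).PosSemidef := by
      have hP := h1a.mul_mul_conjTranspose_same s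
      rw [hsh] at hP
      have : s * (1 - a) * s = a * (1 - a) := by
        rw [Matrix.mul_assoc, hs1a, ← Matrix.mul_assoc, hss]
      rwa [this] at hP
    have hpsd_ba : ((1 - a) * a).PosSemidef := by rwa [← hcomm]
    -- the joint POVM
    set e : Bool → Matrix (Fin n) (Fin n) ℂ := fun b => if b then a else 1 - a with he
    have het : e true = a := if_pos rfl
    have hef : e false = 1 - a := if_neg (by simp)
    set C : Bool × Bool → Matrix (Fin n) (Fin n) ℂ := fun p => e p.1 * e p.2 with hC
    have hCval : ∀ b b', C (b, b') = e b * e b' := fun _ _ => rfl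
    have hesum : e true + e false = 1 := by rw [het, hef]; abel
    have hrow : ∀ b : Bool, ∑ b' : Bool, C (b, b') = e b := by
      intro b
      rw [Fintype.sum_bool, hCval, hCval, ← mul_add, hesum, mul_one]
    have hcol : ∀ b' : Bool, ∑ b : Bool, C (b, b') = e b' := by
      intro b'
      rw [Fintype.sum_bool, hCval, hCval, ← add_mul, hesum, one_mul]
    have hCpovm : IsPOVM C := by
      constructor
      · rintro ⟨b, b'⟩
        rw [hCval]
        cases b <;> cases b' <;> simp only [het, hef]
        · exact hpsd_bb
        · exact hpsd_ba
        · exact hpsd_ab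
        · exact hpsd_aa
      · rw [Fintype.sum_prod_type]
        rw [Fintype.sum_bool, hrow, hrow, hesum]
    -- the coarse-graining along π
    set π : X → Bool := fun x' => decide (x' = x) with hπ
    have hfib : ∀ b : Bool, ∑ x' ∈ univ.filter (fun x' => π x' = b), A x' = e b := by
      intro b
      cases b
      · have : univ.filter (fun x' => π x' = false) = univ.erase x := by
          ext x'
          simp [hπ, Finset.mem_erase]
        rw [this, Finset.sum_erase_eq_sub (mem_univ x), hA.2]
        simp [he, ha_def]
      · have : univ.filter (fun x' => π x' = true) = {x} := by
          ext x'
          simp [hπ]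
        rw [this, Finset.sum_singleton]
        simp [he, ha_def]
    have hdiag := h Bool π C hCpovm
      (by intro y; rw [hrow y, ← hfib y])
      (by intro y'; rw [hcol y', ← hfib y'])
    rw [Fintype.sum_bool] at hdiag
    -- hdiag : C (true, true) + C (false, false) = 1
    have hdiag' : a * a + (1 - a) * (1 - a) = 1 := by
      rw [hCval, hCval, het, hef] at hdiag
      exact hdiag
    have hkey : (2 : ℂ) • (a * a) = (2 : ℂ) • a := by
      have expand : (1 - a) * (1 - a) = 1 - a - a + a * a := by noncomm_ring
      rw [expand] at hdiag'
      rw [two_smul, two_smul]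
      calc a * a + a * a = (a * a + (1 - a - a + a * a)) + (a + a) - 1 := by abel
        _ = a + a := by rw [hdiag']; abel
    have := smul_right_injective (Matrix (Fin n) (Fin n) ℂ) (two_ne_zero) hkey
    exact this
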